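/- Let R be a finite commutative local ring, G = GL_n(R), U and V the upper and lower unitriangular subgroups, L the diagonal subgroup, and w a permutation matrix. Then the map x ↦ e_V·x from e_{U^w}e_{V^w}·C[G] to e_V·e_U·C[G] is an isomorphism of C[L]-C[G] bimodules. -/

import Mathlib

open Matrix MonoidAlgebra

namespace PS

variable {n : ℕ} {R : Type*} [CommRing R]

/-- `g` is upper unitriangular. -/
def IsU (g : GL (Fin n) R) : Prop :=
  (∀ i : Fin n, (g : Matrix (Fin n) (Fin n) R) i i = 1) ∧
    ∀ i j : Fin n, j < i → (g : Matrix (Fin n) (Fin n) R) i j = 0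

/-- `g` is lower unitriangular. -/
def IsV (g : GL (Fin n) R) : Prop :=
  (∀ i : Fin n, (g : Matrix (Fin n) (Fin n) R) i i = 1) ∧
    ∀ i j : Fin n, i < j → (g : Matrix (Fin n) (Fin n) R) i j = 0

/-- `g` is diagonal. -/
def IsL (g : GL (Fin n) R) : Prop :=
  ∀ i j : Fin n, i ≠ j → (g : Matrix (Fin n) (Fin n) R) i j = 0

/-- `g` is a permutation matrix. -/
def IsW (g : GL (Fin n) R) : Prop :=
  ∃ σ : Equiv.Perm (Fin n), (g : Matrix (Fin n) (Fin n) R) = σ.permMatrix R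

def Uset (n : ℕ) (R : Type*) [CommRing R] : Set (GL (Fin n) R) := {g | IsU g}
def Vset (n : ℕ) (R : Type*) [CommRing R] : Set (GL (Fin n) R) := {g | IsV g}
def Lset (n : ℕ) (R : Type*) [CommRing R] : Set (GL (Fin n) R) := {g | IsL g}
def Wset (n : ℕ) (R : Type*) [CommRing R] : Set (GL (Fin n) R) := {g | IsW g}

/-- the diagonal element of `GL n R` with unit entries `d`. -/
def diagGL (d : Fin n → Rˣ) : GL (Fin n) R :=
  ⟨Matrix.diagonal fun i => (d i : R), Matrix.diagonal fun i => ((d i)⁻¹ : Rˣ),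
   by rw [Matrix.diagonal_mul_diagonal]; convert Matrix.diagonal_one using 2; simp,
   by rw [Matrix.diagonal_mul_diagonal]; convert Matrix.diagonal_one using 2; simp⟩

/-- the permutation matrix of `σ`, as an element of `GL n R`. -/
def permGL (σ : Equiv.Perm (Fin n)) : GL (Fin n) R :=
  ⟨σ.permMatrix R, (σ⁻¹).permMatrix R,
   by
    simp only [Equiv.Perm.permMatrix, ← PEquiv.toMatrix_trans, ← Equiv.toPEquiv_trans]
    simp [Equiv.Perm.inv_def, Equiv.self_trans_symm, Equiv.symm_trans_self, Equiv.toPEquiv_refl, PEquiv.toMatrix_refl],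
   by
    simp only [Equiv.Perm.permMatrix, ← PEquiv.toMatrix_trans, ← Equiv.toPEquiv_trans]
    simp [Equiv.Perm.inv_def, Equiv.self_trans_symm, Equiv.symm_trans_self, Equiv.toPEquiv_refl, PEquiv.toMatrix_refl]⟩

/-- `H^w = w⁻¹ H w`, as a subset of the group. -/
def conjSet {G : Type*} [Group G] (S : Set G) (w : G) : Set G := {g | w * g * w⁻¹ ∈ S}

/-- the set of adjacent transpositions (standard Coxeter generators) in `S_n`. -/
def adjT (n : ℕ) : Set (Equiv.Perm (Fin n)) :=
  {σ | ∃ i j : Fin n, (i : ℕ) + 1 = (j : ℕ) ∧ σ = Equiv.swap i j}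

/-- the Coxeter word length of a permutation, with respect to adjacent transpositions. -/
noncomputable def permLength {n : ℕ} (σ : Equiv.Perm (Fin n)) : ℕ :=
  sInf {k | ∃ l : List (Equiv.Perm (Fin n)),
    l.length = k ∧ (∀ τ ∈ l, τ ∈ adjT n) ∧ l.prod = σ}

open scoped Classical in
/-- the averaging element `e_S = |S|⁻¹ ∑_{h ∈ S} h` in the complex group algebra. -/
noncomputable def eAvg {G : Type*} [Group G] [Fintype G] (S : Set G) : MonoidAlgebra ℂ G :=
  (S.toFinset.card : ℂ)⁻¹ • ∑ h ∈ S.toFinset, MonoidAlgebra.of ℂ G h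

/-- the reduction-mod-`m` homomorphism `GL_n(R) → GL_n(R/m)` for a local ring `R`. -/
noncomputable def red (n : ℕ) (R : Type*) [CommRing R] [IsLocalRing R] :
    GL (Fin n) R →* GL (Fin n) (IsLocalRing.ResidueField R) :=
  Matrix.GeneralLinearGroup.map (IsLocalRing.residue R)

/-- the congruence kernel `G_0 = ker (GL_n(R) → GL_n(R/m))`. -/
noncomputable def G0 (n : ℕ) (R : Type*) [CommRing R] [IsLocalRing R] : Set (GL (Fin n) R) :=
  {g | red n R g = 1}

variable [Fintype R] [DecidableEq R]

/-- the primitive idempotent `e_χ = |L|⁻¹ ∑_{l ∈ L} χ(l)⁻¹ l` of `C[L] ⊆ C[G]` attached to the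
character `χ` of `L ≅ (Rˣ)^n`. -/
noncomputable def eChi (χ : (Fin n → Rˣ) →* ℂˣ) : MonoidAlgebra ℂ (GL (Fin n) R) :=
  (Fintype.card (Fin n → Rˣ) : ℂ)⁻¹ •
    ∑ d : Fin n → Rˣ, (((χ d)⁻¹ : ℂˣ) : ℂ) • MonoidAlgebra.of ℂ (GL (Fin n) R) (diagGL d)

/-- the representation `i(χ) ≅ C[G] e_U e_V e_χ`, as a `ℂ`-subspace of `C[G]`
(with `G` acting by left multiplication). -/
noncomputable def Vrep (n : ℕ) (R : Type*) [CommRing R] [Fintype R] [DecidableEq R]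
    (χ : (Fin n → Rˣ) →* ℂˣ) : Submodule ℂ (MonoidAlgebra ℂ (GL (Fin n) R)) :=
  LinearMap.range (LinearMap.mulRight ℂ (eAvg (Uset n R) * eAvg (Vset n R) * eChi χ))

/-- the space `Hom_G(i(χ), i(σ))` of `G`-equivariant linear maps. -/
noncomputable def HomG (n : ℕ) (R : Type*) [CommRing R] [Fintype R] [DecidableEq R]
    (χ σ : (Fin n → Rˣ) →* ℂˣ) :
    Submodule ℂ (↥(Vrep n R χ) →ₗ[ℂ] ↥(Vrep n R σ)) where
  carrier := {f | ∀ (g : GL (Fin n) R) (x y : Vrep n R χ),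
    (x : MonoidAlgebra ℂ (GL (Fin n) R)) = MonoidAlgebra.of ℂ (GL (Fin n) R) g * (y : MonoidAlgebra ℂ (GL (Fin n) R)) →
    ((f x : Vrep n R σ) : MonoidAlgebra ℂ (GL (Fin n) R)) = MonoidAlgebra.of ℂ (GL (Fin n) R) g * ((f y : Vrep n R σ) : MonoidAlgebra ℂ (GL (Fin n) R))}
  add_mem' := by
    intro f g hf hg k x y h
    simp only [LinearMap.add_apply, Submodule.coe_add, hf k x y h, hg k x y h, mul_add]
  zero_mem' := by intro k x y h; simp
  smul_mem' := by
    intro c f hf k x y h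
    simp only [LinearMap.smul_apply, Submodule.coe_smul, hf k x y h, Algebra.mul_smul_comm]

end PS


namespace PSAux
open PS
open scoped Classical
set_option linter.unusedSectionVars false
set_option linter.unusedVariables false


variable {Γ : Type*} [Group Γ] [Fintype Γ]

structure IsSG (H : Set Γ) : Prop where
  one_mem : (1 : Γ) ∈ H
  mul_mem : ∀ {a b : Γ}, a ∈ H → b ∈ H → a * b ∈ H
  inv_mem : ∀ {a : Γ}, a ∈ H → a⁻¹ ∈ H


theorem of_mul_eAvg {H : Set Γ} (hH : IsSG H) {g : Γ} (hg : g ∈ H) :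
    MonoidAlgebra.of ℂ Γ g * eAvg H = eAvg H := by
  unfold eAvg
  rw [mul_smul_comm, Finset.mul_sum]
  congr 1
  refine Finset.sum_nbij' (fun x => g * x) (fun x => g⁻¹ * x) ?_ ?_ ?_ ?_ ?_
  · intro x hx; rw [Set.mem_toFinset] at *; exact hH.mul_mem hg hx
  · intro x hx; rw [Set.mem_toFinset] at *; exact hH.mul_mem (hH.inv_mem hg) hx
  · intro x _; simp [mul_assoc]
  · intro x _; simp [mul_assoc]
  · intro x _; simp [← _root_.map_mul]

theorem eAvg_mul_of {H : Set Γ} (hH : IsSG H) {g : Γ} (hg : g ∈ H) :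
    eAvg H * MonoidAlgebra.of ℂ Γ g = eAvg H := by
  unfold eAvg
  rw [smul_mul_assoc, Finset.sum_mul]
  congr 1
  refine Finset.sum_nbij' (fun x => x * g) (fun x => x * g⁻¹) ?_ ?_ ?_ ?_ ?_
  · intro x hx; rw [Set.mem_toFinset] at *; exact hH.mul_mem hx hg
  · intro x hx; rw [Set.mem_toFinset] at *; exact hH.mul_mem hx (hH.inv_mem hg)
  · intro x _; simp [mul_assoc]
  · intro x _; simp [mul_assoc]
  · intro x _; simp [← _root_.map_mul]

theorem card_toFinset_ne_zero {H : Set Γ} (hne : H.Nonempty) :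
    (H.toFinset.card : ℂ) ≠ 0 := by
  rw [Nat.cast_ne_zero, ← Nat.pos_iff_ne_zero, Finset.card_pos]
  exact Set.toFinset_nonempty.mpr hne

/-- if every element of `S` fixes `x` by left multiplication, so does `eAvg S`. -/
theorem eAvg_mul_fix {S : Set Γ} (hne : S.Nonempty) {x : MonoidAlgebra ℂ Γ}
    (hfix : ∀ g ∈ S, MonoidAlgebra.of ℂ Γ g * x = x) : eAvg S * x = x := by
  unfold eAvg
  rw [smul_mul_assoc, Finset.sum_mul]
  rw [Finset.sum_congr rfl (fun g hg => hfix g (Set.mem_toFinset.mp hg))]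
  rw [Finset.sum_const, ← Nat.cast_smul_eq_nsmul ℂ, smul_smul]
  rw [inv_mul_cancel₀ (card_toFinset_ne_zero hne), one_smul]

theorem eAvg_mul_eAvg_absorb {S H : Set Γ} (hH : IsSG H) (hne : S.Nonempty) (hsub : S ⊆ H) :
    eAvg S * eAvg H = eAvg H :=
  eAvg_mul_fix hne (fun g hg => of_mul_eAvg hH (hsub hg))

theorem eAvg_fix_mul {S : Set Γ} (hne : S.Nonempty) {x : MonoidAlgebra ℂ Γ}
    (hfix : ∀ g ∈ S, x * MonoidAlgebra.of ℂ Γ g = x) : x * eAvg S = x := by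
  unfold eAvg
  rw [mul_smul_comm, Finset.mul_sum]
  rw [Finset.sum_congr rfl (fun g hg => hfix g (Set.mem_toFinset.mp hg))]
  rw [Finset.sum_const, ← Nat.cast_smul_eq_nsmul ℂ, smul_smul]
  rw [inv_mul_cancel₀ (card_toFinset_ne_zero hne), one_smul]

theorem eAvg_absorb_mul_eAvg {S H : Set Γ} (hH : IsSG H) (hne : S.Nonempty) (hsub : S ⊆ H) :
    eAvg H * eAvg S = eAvg H :=
  eAvg_fix_mul hne (fun g hg => eAvg_mul_of hH (hsub hg))

theorem eAvg_idem {H : Set Γ} (hH : IsSG H) : eAvg H * eAvg H = eAvg H :=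
  eAvg_mul_eAvg_absorb hH ⟨1, hH.one_mem⟩ le_rfl

/-- products along a bijection `S × T → X` multiply the averages. -/
theorem eAvg_mul_eAvg {S T X : Set Γ}
    (hbij : Set.BijOn (fun p : Γ × Γ => p.1 * p.2) (S ×ˢ T) X) :
    eAvg S * eAvg T = eAvg X := by
  have hmemST : ∀ p : Γ × Γ, p ∈ S.toFinset ×ˢ T.toFinset ↔ p ∈ S ×ˢ T := by
    intro p
    rw [Finset.mem_product, Set.mem_prod, Set.mem_toFinset, Set.mem_toFinset]
  have hcard : X.toFinset.card = S.toFinset.card * T.toFinset.card := by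
    rw [← Finset.card_product]
    refine (Finset.card_bij (fun p _ => p.1 * p.2) ?_ ?_ ?_).symm
    · intro p hp
      rw [Set.mem_toFinset]
      exact hbij.mapsTo ((hmemST p).mp hp)
    · intro p hp q hq hpq
      exact hbij.injOn ((hmemST p).mp hp) ((hmemST q).mp hq) hpq
    · intro x hx
      obtain ⟨p, hp, hpx⟩ := hbij.surjOn (Set.mem_toFinset.mp hx)
      exact ⟨p, (hmemST p).mpr hp, hpx⟩
  have hsum : (∑ h ∈ S.toFinset, MonoidAlgebra.of ℂ Γ h) * (∑ h ∈ T.toFinset, MonoidAlgebra.of ℂ Γ h)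
      = ∑ h ∈ X.toFinset, MonoidAlgebra.of ℂ Γ h := by
    rw [Finset.sum_mul_sum, ← Finset.sum_product']
    refine Finset.sum_bij (fun p _ => p.1 * p.2) ?_ ?_ ?_ ?_
    · intro p hp
      rw [Set.mem_toFinset]
      exact hbij.mapsTo ((hmemST p).mp hp)
    · intro p hp q hq hpq
      exact hbij.injOn ((hmemST p).mp hp) ((hmemST q).mp hq) hpq
    · intro x hx
      obtain ⟨p, hp, hpx⟩ := hbij.surjOn (Set.mem_toFinset.mp hx)
      exact ⟨p, (hmemST p).mpr hp, hpx⟩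
    · intro p _
      simp [← _root_.map_mul]
  unfold eAvg
  rw [smul_mul_assoc, mul_smul_comm, hsum, smul_smul, hcard, Nat.cast_mul, mul_inv]


variable {Γ : Type*} [Group Γ] [Fintype Γ]


/-- inner product on the group algebra making the group elements orthonormal. -/
noncomputable def ip (x y : MonoidAlgebra ℂ Γ) : ℂ :=
  ∑ g : Γ, (starRingEnd ℂ) (x.coeff g) * y.coeff g

theorem ip_self_eq_zero {x : MonoidAlgebra ℂ Γ} (h : ip x x = 0) : x = 0 := by
  have h2 : ∀ g : Γ, x.coeff g = 0 := by
    have hre : (∑ g : Γ, Complex.normSq (x.coeff g) : ℝ) = 0 := by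
      have : ((∑ g : Γ, Complex.normSq (x.coeff g) : ℝ) : ℂ) = 0 := by
        rw [Complex.ofReal_sum]
        rw [← h]
        unfold ip
        exact Finset.sum_congr rfl fun g _ => by
          rw [← Complex.normSq_eq_conj_mul_self]
      exact_mod_cast this
    intro g
    have := (Finset.sum_eq_zero_iff_of_nonneg
      (fun i _ => Complex.normSq_nonneg (x.coeff i))).mp hre g (Finset.mem_univ g)
    exact Complex.normSq_eq_zero.mp this
  ext g
  exact h2 g

theorem ip_of_left (g : Γ) (x y : MonoidAlgebra ℂ Γ) :
    ip (MonoidAlgebra.of ℂ Γ g * x) y = ip x (MonoidAlgebra.of ℂ Γ g⁻¹ * y) := by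
  have hL : ∀ b, (MonoidAlgebra.of ℂ Γ g * x).coeff b = x.coeff (g⁻¹ * b) := fun b => by
    rw [MonoidAlgebra.of_apply, MonoidAlgebra.coeff_single_mul_apply, one_mul]
  have hR : ∀ a, (MonoidAlgebra.of ℂ Γ g⁻¹ * y).coeff a = y.coeff (g * a) := fun a => by
    rw [MonoidAlgebra.of_apply, MonoidAlgebra.coeff_single_mul_apply, inv_inv, one_mul]
  unfold ip
  calc ∑ b : Γ, (starRingEnd ℂ) ((MonoidAlgebra.of ℂ Γ g * x).coeff b) * y.coeff b
      = ∑ b : Γ, (starRingEnd ℂ) (x.coeff (g⁻¹ * b)) * y.coeff b := by simp only [hL]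
    _ = ∑ a : Γ, (starRingEnd ℂ) (x.coeff a) * y.coeff (g * a) :=
        (Fintype.sum_equiv (Equiv.mulLeft g) _ _ (fun a => by simp)).symm
    _ = ∑ a : Γ, (starRingEnd ℂ) (x.coeff a) * ((MonoidAlgebra.of ℂ Γ g⁻¹ * y).coeff a) := by
        simp only [hR]

theorem ip_smul_left (c : ℂ) (x y : MonoidAlgebra ℂ Γ) :
    ip (c • x) y = (starRingEnd ℂ) c * ip x y := by
  unfold ip
  rw [Finset.mul_sum]
  refine Finset.sum_congr rfl fun a _ => ?_
  rw [MonoidAlgebra.coeff_smul_apply, smul_eq_mul, _root_.map_mul (starRingEnd ℂ) c (x.coeff a), mul_assoc]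

theorem ip_smul_right (c : ℂ) (x y : MonoidAlgebra ℂ Γ) :
    ip x (c • y) = c * ip x y := by
  unfold ip
  rw [Finset.mul_sum]
  refine Finset.sum_congr rfl fun a _ => ?_
  rw [MonoidAlgebra.coeff_smul_apply, smul_eq_mul]; ring

theorem ip_sum_left {ι : Type*} (s : Finset ι) (f : ι → MonoidAlgebra ℂ Γ) (y : MonoidAlgebra ℂ Γ) :
    ip (∑ i ∈ s, f i) y = ∑ i ∈ s, ip (f i) y := by
  unfold ip
  rw [Finset.sum_comm]
  refine Finset.sum_congr rfl fun a _ => ?_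
  rw [← Finset.sum_mul, ← map_sum]
  congr 2
  rw [MonoidAlgebra.coeff_sum]
  exact Finset.sum_apply' a

theorem ip_sum_right {ι : Type*} (s : Finset ι) (f : ι → MonoidAlgebra ℂ Γ) (y : MonoidAlgebra ℂ Γ) :
    ip y (∑ i ∈ s, f i) = ∑ i ∈ s, ip y (f i) := by
  unfold ip
  rw [Finset.sum_comm]
  refine Finset.sum_congr rfl fun a _ => ?_
  rw [← Finset.mul_sum]
  congr 1
  rw [MonoidAlgebra.coeff_sum]
  exact Finset.sum_apply' a

/-- moving a symmetric average across the inner product. -/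
theorem ip_eAvg_move {H : Set Γ} (hinv : ∀ {a : Γ}, a ∈ H → a⁻¹ ∈ H) (x y : MonoidAlgebra ℂ Γ) :
    ip (eAvg H * x) y = ip x (eAvg H * y) := by
  unfold eAvg
  rw [smul_mul_assoc, smul_mul_assoc, ip_smul_left, ip_smul_right]
  have hc : (starRingEnd ℂ) ((H.toFinset.card : ℂ)⁻¹) = (H.toFinset.card : ℂ)⁻¹ := by
    rw [map_inv₀, Complex.conj_natCast]
  rw [hc]
  congr 1
  rw [Finset.sum_mul, Finset.sum_mul, ip_sum_left, ip_sum_right]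
  have step : ∀ h ∈ H.toFinset,
      ip (MonoidAlgebra.of ℂ Γ h * x) y = ip x (MonoidAlgebra.of ℂ Γ h⁻¹ * y) :=
    fun h _ => ip_of_left h x y
  rw [Finset.sum_congr rfl step]
  refine Finset.sum_nbij' (fun a => a⁻¹) (fun a => a⁻¹) ?_ ?_ ?_ ?_ ?_
  · intro a ha; rw [Set.mem_toFinset] at *; exact hinv ha
  · intro a ha; rw [Set.mem_toFinset] at *; exact hinv ha
  · intro a _; simp
  · intro a _; simp
  · intro a _; rfl



variable {n : ℕ} {R : Type*} [CommRing R] [Fintype R] [DecidableEq R]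

def PatM (E : Fin n → Fin n → Prop) (M : Matrix (Fin n) (Fin n) R) : Prop :=
  (∀ i, M i i = 1) ∧ ∀ i j : Fin n, i ≠ j → ¬ E i j → M i j = 0

def Pat (R : Type*) [CommRing R] (E : Fin n → Fin n → Prop) : Set (GL (Fin n) R) :=
  {g | PatM E (g : Matrix (Fin n) (Fin n) R)}

structure GoodE (E : Fin n → Fin n → Prop) (ρ : Equiv.Perm (Fin n)) : Prop where
  htrans : ∀ {i j k}, E i j → E j k → E i k
  hlt : ∀ {i j}, E i j → ρ i < ρ j

theorem GoodE.irrefl {E : Fin n → Fin n → Prop} {ρ} (hE : GoodE E ρ) (i : Fin n) : ¬ E i i :=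
  fun h => lt_irrefl _ (hE.hlt h)

theorem patM_one {E : Fin n → Fin n → Prop} : PatM E (1 : Matrix (Fin n) (Fin n) R) :=
  ⟨fun i => Matrix.one_apply_eq i, fun _ _ hij _ => Matrix.one_apply_ne hij⟩

theorem one_mem_pat {E : Fin n → Fin n → Prop} : (1 : GL (Fin n) R) ∈ Pat R E := patM_one

theorem patM_mul {E₁ E₂ E : Fin n → Fin n → Prop} {ρ}
    (hsub1 : ∀ {i j}, E₁ i j → E i j) (hsub2 : ∀ {i j}, E₂ i j → E i j)
    (hE : GoodE E ρ) {A B : Matrix (Fin n) (Fin n) R}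
    (hA : PatM E₁ A) (hB : PatM E₂ B) : PatM E (A * B) := by
  constructor
  · intro i
    rw [Matrix.mul_apply]
    rw [Finset.sum_eq_single i]
    · rw [hA.1, hB.1, one_mul]
    · intro k _ hk
      by_cases h1 : E₁ i k
      · by_cases h2 : E₂ k i
        · exact absurd (hE.hlt (hsub2 h2)) (not_lt.mpr (le_of_lt (hE.hlt (hsub1 h1))))
        · rw [hB.2 k i hk h2, mul_zero]
      · rw [hA.2 i k (Ne.symm hk) h1, zero_mul]
    · intro h; exact absurd (Finset.mem_univ i) h
  · intro i j hij hEij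
    rw [Matrix.mul_apply]
    refine Finset.sum_eq_zero fun k _ => ?_
    by_cases hki : k = i
    · subst hki
      rw [hB.2 k j hij (fun h => hEij (hsub2 h)), mul_zero]
    · by_cases hkj : k = j
      · subst hkj
        rw [hA.2 i k hij (fun h => hEij (hsub1 h)), zero_mul]
      · by_cases h1 : E₁ i k
        · by_cases h2 : E₂ k j
          · exact absurd (hE.htrans (hsub1 h1) (hsub2 h2)) hEij
          · rw [hB.2 k j hkj h2, mul_zero]
        · rw [hA.2 i k (fun h => hki (h.symm)) h1, zero_mul]

/-- powers of a strictly `E`-supported matrix increase `ρ`-level. -/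
theorem pow_supp {E : Fin n → Fin n → Prop} {ρ} (hE : GoodE E ρ)
    {N : Matrix (Fin n) (Fin n) R} (hN : ∀ i j, ¬ E i j → N i j = 0) :
    ∀ m, ∀ i j : Fin n, (N ^ (m + 1)) i j ≠ 0 → E i j ∧ (ρ i : ℕ) + (m + 1) ≤ (ρ j : ℕ) := by
  intro m
  induction m with
  | zero =>
    intro i j h
    rw [pow_one] at h
    have hE' : E i j := by by_contra hc; exact h (hN i j hc)
    exact ⟨hE', hE.hlt hE'⟩
  | succ m ih =>
    intro i j h
    rw [pow_succ, Matrix.mul_apply] at h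
    obtain ⟨k, _, hk⟩ := Finset.exists_ne_zero_of_sum_ne_zero h
    have hl : (N ^ (m + 1)) i k ≠ 0 := fun hz => hk (by rw [hz, zero_mul])
    have hr : N k j ≠ 0 := fun hz => hk (by rw [hz, mul_zero])
    obtain ⟨hik, hikn⟩ := ih i k hl
    have hkj : E k j := by by_contra hc; exact hr (hN k j hc)
    exact ⟨hE.htrans hik hkj, by
      have := hE.hlt hkj
      omega⟩

theorem pow_card_eq_zero {E : Fin n → Fin n → Prop} {ρ} (hE : GoodE E ρ)
    {N : Matrix (Fin n) (Fin n) R} (hN : ∀ i j, ¬ E i j → N i j = 0) :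
    N ^ (n + 1) = 0 := by
  ext i j
  rw [Matrix.zero_apply]
  by_contra h
  have := (pow_supp hE hN n i j h).2
  have h1 : (ρ j : ℕ) < n := (ρ j).isLt
  have h2 : (ρ i : ℕ) ≥ 0 := Nat.zero_le _
  omega

theorem inv_mem_pat {E : Fin n → Fin n → Prop} {ρ} (hE : GoodE E ρ)
    {g : GL (Fin n) R} (hg : g ∈ Pat R E) : g⁻¹ ∈ Pat R E := by
  set N : Matrix (Fin n) (Fin n) R := (g : Matrix (Fin n) (Fin n) R) - 1 with hNdef
  have hN : ∀ i j, ¬ E i j → N i j = 0 := by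
    intro i j hij
    by_cases h : i = j
    · subst h; simp [hNdef, hg.1 i]
    · simp [hNdef, hg.2 i j h hij, Matrix.one_apply_ne h]
  have hNneg : ∀ i j, ¬ E i j → (-N) i j = 0 := by
    intro i j hij; rw [Matrix.neg_apply, hN i j hij, neg_zero]
  set B : Matrix (Fin n) (Fin n) R := ∑ m ∈ Finset.range (n + 2), (-N) ^ m with hBdef
  have hNn : (-N) ^ (n + 2) = 0 := by
    rw [pow_succ, pow_card_eq_zero hE hNneg, zero_mul]
  have hgN : (g : Matrix (Fin n) (Fin n) R) = 1 + N := by rw [hNdef]; noncomm_ring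
  have hmul : (g : Matrix (Fin n) (Fin n) R) * B = 1 := by
    rw [hgN, hBdef, Finset.mul_sum]
    have : ∀ m, (1 + N) * (-N) ^ m = (-N) ^ m - (-N) ^ (m + 1) := by
      intro m
      rw [pow_succ']
      noncomm_ring
    rw [Finset.sum_congr rfl (fun m _ => this m)]
    rw [Finset.sum_range_sub' (fun m => (-N) ^ m) (n + 2), hNn, pow_zero, sub_zero]
  have hmul' : B * (g : Matrix (Fin n) (Fin n) R) = 1 := by
    rw [hgN, hBdef, Finset.sum_mul]
    have : ∀ m, (-N) ^ m * (1 + N) = (-N) ^ m - (-N) ^ (m + 1) := by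
      intro m
      rw [pow_succ]
      noncomm_ring
    rw [Finset.sum_congr rfl (fun m _ => this m)]
    rw [Finset.sum_range_sub' (fun m => (-N) ^ m) (n + 2), hNn, pow_zero, sub_zero]
  have hval : ((g⁻¹ : GL (Fin n) R) : Matrix (Fin n) (Fin n) R) = B := by
    calc ((g⁻¹ : GL (Fin n) R) : Matrix (Fin n) (Fin n) R)
        = ((g⁻¹ : GL (Fin n) R) : Matrix (Fin n) (Fin n) R) * ((g : Matrix (Fin n) (Fin n) R) * B) := by
          rw [hmul, mul_one]
      _ = (((g⁻¹ : GL (Fin n) R) : Matrix (Fin n) (Fin n) R) * (g : Matrix (Fin n) (Fin n) R)) * B := by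
          rw [mul_assoc]
      _ = B := by rw [Units.inv_mul, one_mul]
  show PatM E _
  rw [hval]
  constructor
  · intro i
    rw [hBdef, Matrix.sum_apply, Finset.sum_range_succ' (fun m => ((-N) ^ m) i i) (n + 1)]
    have hz : ∀ m ∈ Finset.range (n + 1), ((-N) ^ (m + 1)) i i = 0 := by
      intro m _
      by_contra h
      exact hE.irrefl i (pow_supp hE hNneg m i i h).1
    rw [Finset.sum_congr rfl hz, Finset.sum_const, smul_zero, pow_zero, Matrix.one_apply_eq, zero_add]
  · intro i j hij hEij
    rw [hBdef, Matrix.sum_apply, Finset.sum_range_succ' (fun m => ((-N) ^ m) i j) (n + 1)]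
    have hz : ∀ m ∈ Finset.range (n + 1), ((-N) ^ (m + 1)) i j = 0 := by
      intro m _
      by_contra h
      exact hEij (pow_supp hE hNneg m i j h).1
    rw [Finset.sum_congr rfl hz, Finset.sum_const, smul_zero, pow_zero, Matrix.one_apply_ne hij, zero_add]

theorem mul_mem_pat {E : Fin n → Fin n → Prop} {ρ} (hE : GoodE E ρ)
    {g h : GL (Fin n) R} (hg : g ∈ Pat R E) (hh : h ∈ Pat R E) : g * h ∈ Pat R E := by
  show PatM E _
  rw [Units.val_mul]
  exact patM_mul (fun h => h) (fun h => h) hE hg hh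

theorem pat_sub {E₁ E : Fin n → Fin n → Prop} (hsub : ∀ {i j}, E₁ i j → E i j) :
    Pat R E₁ ⊆ Pat R E :=
  fun g hg => ⟨hg.1, fun i j hij hEij => hg.2 i j hij (fun h => hEij (hsub h))⟩

noncomputable def Efin (E : Fin n → Fin n → Prop) : Finset (Fin n × Fin n) :=
  Finset.univ.filter (fun p => p.1 ≠ p.2 ∧ E p.1 p.2)

noncomputable def Mf (E : Fin n → Fin n → Prop) (f : {p // p ∈ Efin (n := n) E} → R) :
    Matrix (Fin n) (Fin n) R :=
  fun i j => if h : (i, j) ∈ Efin (n := n) E then f ⟨(i, j), h⟩ else if i = j then 1 else 0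

theorem diag_not_mem_Efin {E : Fin n → Fin n → Prop} (i : Fin n) : (i, i) ∉ Efin (n := n) E := by
  intro h
  rw [Efin, Finset.mem_filter] at h
  exact h.2.1 rfl

theorem mem_Efin {E : Fin n → Fin n → Prop} {i j : Fin n} :
    (i, j) ∈ Efin (n := n) E ↔ i ≠ j ∧ E i j := by
  rw [Efin, Finset.mem_filter]
  simp

theorem det_Mf {E : Fin n → Fin n → Prop} {ρ} (hE : GoodE E ρ)
    (f : {p // p ∈ Efin (n := n) E} → R) : (Mf E f).det = 1 := by
  rw [← Matrix.det_submatrix_equiv_self ρ.symm (Mf E f)]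
  have htri : ((Mf E f).submatrix ⇑ρ.symm ⇑ρ.symm).BlockTriangular id := by
    intro i j hij
    rw [Matrix.submatrix_apply]
    have hne : ρ.symm i ≠ ρ.symm j := fun h => absurd (ρ.symm.injective h) (by
      intro h'; rw [h'] at hij; exact lt_irrefl _ hij)
    rw [Mf]
    rw [dif_neg (fun hmem => ?_), if_neg hne]
    have hEij := (mem_Efin.mp hmem).2
    have := hE.hlt hEij
    rw [Equiv.apply_symm_apply, Equiv.apply_symm_apply] at this
    exact absurd this (not_lt.mpr (le_of_lt hij))
  rw [Matrix.det_of_upperTriangular htri]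
  refine Finset.prod_eq_one fun i _ => ?_
  rw [Matrix.submatrix_apply, Mf, dif_neg (diag_not_mem_Efin _), if_pos rfl]

theorem isUnit_Mf {E : Fin n → Fin n → Prop} {ρ} (hE : GoodE E ρ)
    (f : {p // p ∈ Efin (n := n) E} → R) : IsUnit (Mf E f) := by
  rw [Matrix.isUnit_iff_isUnit_det, det_Mf hE f]
  exact isUnit_one

/-- `Pat E` is parametrized by free entries in `E`. -/
noncomputable def patEquiv {E : Fin n → Fin n → Prop} {ρ} (hE : GoodE E ρ) :
    ↥(Pat R E) ≃ ({p // p ∈ Efin (n := n) E} → R) where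
  toFun g := fun p => ((g : GL (Fin n) R) : Matrix (Fin n) (Fin n) R) p.1.1 p.1.2
  invFun f := ⟨(isUnit_Mf hE f).unit, by
    show PatM E _
    rw [IsUnit.unit_spec]
    constructor
    · intro i
      rw [Mf, dif_neg (diag_not_mem_Efin _), if_pos rfl]
    · intro i j hij hEij
      rw [Mf, dif_neg (fun hmem => hEij (mem_Efin.mp hmem).2), if_neg hij]⟩
  left_inv := by
    intro g
    refine Subtype.ext (Units.ext ?_)
    rw [IsUnit.unit_spec]
    ext i j
    by_cases h : (i, j) ∈ Efin (n := n) E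
    · rw [Mf, dif_pos h]
    · by_cases hij : i = j
      · subst hij
        rw [Mf, dif_neg h, if_pos rfl, (g.2.1 i)]
      · rw [Mf, dif_neg h, if_neg hij]
        have := g.2.2 i j hij
        rw [this (fun hEij => h (mem_Efin.mpr ⟨hij, hEij⟩))]
  right_inv := by
    intro f
    funext p
    show (Mf E f) p.1.1 p.1.2 = f p
    rw [Mf]
    have hp : (p.1.1, p.1.2) ∈ Efin (n := n) E := by
      rw [show (p.1.1, p.1.2) = p.1 from rfl]
      exact p.2
    rw [dif_pos hp]

theorem card_pat {E : Fin n → Fin n → Prop} {ρ} (hE : GoodE E ρ) :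
    (Pat R E).toFinset.card = Fintype.card R ^ (Efin (n := n) E).card := by
  rw [Set.toFinset_card, Fintype.card_congr (patEquiv (R := R) hE), Fintype.card_fun,
    Fintype.card_coe]

theorem pat_inter_trivial {E₁ E₂ : Fin n → Fin n → Prop}
    (hd : ∀ {i j}, E₁ i j → E₂ i j → False) {g : GL (Fin n) R}
    (h1 : g ∈ Pat R E₁) (h2 : g ∈ Pat R E₂) : g = 1 := by
  refine Units.ext ?_
  rw [Units.val_one]
  ext i j
  by_cases hij : i = j
  · subst hij
    rw [h1.1 i, Matrix.one_apply_eq]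
  · rw [Matrix.one_apply_ne hij]
    by_cases hE : E₁ i j
    · exact h2.2 i j hij (fun h => hd hE h)
    · exact h1.2 i j hij hE

theorem pat_bijOn {E₁ E₂ E : Fin n → Fin n → Prop} {ρ}
    (hd : ∀ {i j}, E₁ i j → E₂ i j → False)
    (hsub1 : ∀ {i j}, E₁ i j → E i j) (hsub2 : ∀ {i j}, E₂ i j → E i j)
    (hcov : ∀ {i j : Fin n}, i ≠ j → E i j → E₁ i j ∨ E₂ i j)
    (h1 : GoodE E₁ ρ) (h2 : GoodE E₂ ρ) (hE : GoodE E ρ) :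
    Set.BijOn (fun p : (GL (Fin n) R) × (GL (Fin n) R) => p.1 * p.2)
      ((Pat R E₁) ×ˢ (Pat R E₂)) (Pat R E) := by
  have hmaps : Set.MapsTo (fun p : (GL (Fin n) R) × (GL (Fin n) R) => p.1 * p.2)
      ((Pat R E₁) ×ˢ (Pat R E₂)) (Pat R E) := by
    rintro ⟨a, b⟩ ⟨ha, hb⟩
    show PatM E _
    rw [Units.val_mul]
    exact patM_mul hsub1 hsub2 hE ha hb
  have hinj : Set.InjOn (fun p : (GL (Fin n) R) × (GL (Fin n) R) => p.1 * p.2)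
      ((Pat R E₁) ×ˢ (Pat R E₂)) := by
    rintro ⟨a, b⟩ ⟨ha, hb⟩ ⟨a', b'⟩ ⟨ha', hb'⟩ heq
    simp only at heq
    have hc1 : a'⁻¹ * a ∈ Pat R E₁ := mul_mem_pat h1 (inv_mem_pat h1 ha') ha
    have hcb : a'⁻¹ * a = b' * b⁻¹ := by
      calc a'⁻¹ * a = a'⁻¹ * (a * b) * b⁻¹ := by group
        _ = a'⁻¹ * (a' * b') * b⁻¹ := by rw [heq]
        _ = b' * b⁻¹ := by group
    have hc2 : a'⁻¹ * a ∈ Pat R E₂ := by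
      rw [hcb]
      exact mul_mem_pat h2 hb' (inv_mem_pat h2 hb)
    have h1' : a'⁻¹ * a = 1 := pat_inter_trivial hd hc1 hc2
    have haa : a = a' := by
      have := congrArg (fun x => a' * x) h1'
      simpa [← mul_assoc] using this
    have hbb : b = b' := by
      rw [haa] at heq
      exact mul_left_cancel heq
    rw [Prod.ext_iff]
    exact ⟨haa, hbb⟩
  refine ⟨hmaps, hinj, ?_⟩
  -- surjectivity by counting
  have hEfin : Efin (n := n) E₁ ∪ Efin (n := n) E₂ = Efin (n := n) E := by
    ext p
    rw [Finset.mem_union, mem_Efin, mem_Efin, mem_Efin]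
    constructor
    · rintro (⟨hne, h⟩ | ⟨hne, h⟩)
      · exact ⟨hne, hsub1 h⟩
      · exact ⟨hne, hsub2 h⟩
    · rintro ⟨hne, h⟩
      rcases hcov hne h with h' | h'
      · exact Or.inl ⟨hne, h'⟩
      · exact Or.inr ⟨hne, h'⟩
  have hdisj : Disjoint (Efin (n := n) E₁) (Efin (n := n) E₂) := by
    rw [Finset.disjoint_left]
    intro p hp1 hp2
    exact hd (mem_Efin.mp hp1).2 (mem_Efin.mp hp2).2
  have hcards : (Pat R E).toFinset.card
      = (Pat R E₁).toFinset.card * (Pat R E₂).toFinset.card := by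
    rw [card_pat (R := R) hE, card_pat (R := R) h1, card_pat (R := R) h2, ← pow_add]
    congr 1
    rw [← Finset.card_union_of_disjoint hdisj, hEfin]
  -- image finset
  intro x hx
  have hmem : ∀ p : (GL (Fin n) R) × (GL (Fin n) R),
      p ∈ (Pat R E₁).toFinset ×ˢ (Pat R E₂).toFinset ↔ p ∈ (Pat R E₁) ×ˢ (Pat R E₂) := by
    intro p
    rw [Finset.mem_product, Set.mem_prod, Set.mem_toFinset, Set.mem_toFinset]
  set F := ((Pat R E₁).toFinset ×ˢ (Pat R E₂).toFinset).image
    (fun p : (GL (Fin n) R) × (GL (Fin n) R) => p.1 * p.2) with hF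
  have hFsub : F ⊆ (Pat R E).toFinset := by
    intro y hy
    rw [hF, Finset.mem_image] at hy
    obtain ⟨p, hp, hpy⟩ := hy
    rw [Set.mem_toFinset]
    rw [← hpy]
    exact hmaps ((hmem p).mp hp)
  have hFcard : F.card = (Pat R E).toFinset.card := by
    rw [hF, Finset.card_image_of_injOn (fun p hp q hq => hinj ((hmem p).mp hp) ((hmem q).mp hq)),
      Finset.card_product, hcards]
  have hFeq : F = (Pat R E).toFinset := Finset.eq_of_subset_of_card_le hFsub (le_of_eq hFcard.symm)
  have hxF : x ∈ F := by
    rw [hFeq, Set.mem_toFinset]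
    exact hx
  rw [hF, Finset.mem_image] at hxF
  obtain ⟨p, hp, hpx⟩ := hxF
  exact ⟨p, (hmem p).mp hp, hpx⟩


section Ident
variable {n : ℕ} {R : Type*} [CommRing R] [Fintype R] [DecidableEq R]

def EU (n : ℕ) : Fin n → Fin n → Prop := fun i j => i < j
def EV (n : ℕ) : Fin n → Fin n → Prop := fun i j => j < i
def EUc (σ : Equiv.Perm (Fin n)) : Fin n → Fin n → Prop := fun i j => σ⁻¹ i < σ⁻¹ j
def EVc (σ : Equiv.Perm (Fin n)) : Fin n → Fin n → Prop := fun i j => σ⁻¹ j < σ⁻¹ i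
def EI (E F : Fin n → Fin n → Prop) : Fin n → Fin n → Prop := fun i j => E i j ∧ F i j

theorem goodEU : GoodE (EU n) (Equiv.refl (Fin n)) :=
  ⟨fun h1 h2 => lt_trans h1 h2, fun h => by simpa [EU] using h⟩

theorem goodEV : GoodE (EV n) (Fin.revPerm) :=
  ⟨fun h1 h2 => lt_trans h2 h1, fun h => by simpa [EV, Fin.rev_lt_rev] using h⟩

theorem goodEUc (σ : Equiv.Perm (Fin n)) : GoodE (EUc σ) σ⁻¹ :=
  ⟨fun h1 h2 => lt_trans h1 h2, fun h => h⟩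

theorem goodEVc (σ : Equiv.Perm (Fin n)) : GoodE (EVc σ) ((σ⁻¹ : Equiv.Perm (Fin n)).trans Fin.revPerm) :=
  ⟨fun h1 h2 => lt_trans h2 h1, fun h => by simpa [EVc, Equiv.Perm.inv_def, Fin.rev_lt_rev] using h⟩

theorem goodEI {E F : Fin n → Fin n → Prop} {ρ ρ'} (hE : GoodE E ρ) (hF : GoodE F ρ') :
    GoodE (EI E F) ρ :=
  ⟨fun a b => ⟨hE.htrans a.1 b.1, hF.htrans a.2 b.2⟩, fun a => hE.hlt a.1⟩

theorem goodEI' {E F : Fin n → Fin n → Prop} {ρ ρ'} (hE : GoodE E ρ) (hF : GoodE F ρ') :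
    GoodE (EI E F) ρ' :=
  ⟨fun a b => ⟨hE.htrans a.1 b.1, hF.htrans a.2 b.2⟩, fun a => hF.hlt a.2⟩

theorem isSG_pat {E : Fin n → Fin n → Prop} {ρ} (hE : GoodE E ρ) : IsSG (Pat R E) :=
  ⟨one_mem_pat, fun ha hb => mul_mem_pat hE ha hb, fun ha => inv_mem_pat hE ha⟩

theorem pat_ne {E : Fin n → Fin n → Prop} : (Pat R E).Nonempty := ⟨1, one_mem_pat⟩

theorem Uset_eq : Uset n R = Pat R (EU n) := by
  ext g
  constructor
  · rintro ⟨h1, h2⟩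
    exact ⟨h1, fun i j hij hEij => h2 i j ((not_lt.mp hEij).lt_of_ne (Ne.symm hij))⟩
  · rintro ⟨h1, h2⟩
    exact ⟨h1, fun i j hij => h2 i j (ne_of_gt hij) (lt_asymm hij)⟩

theorem Vset_eq : Vset n R = Pat R (EV n) := by
  ext g
  constructor
  · rintro ⟨h1, h2⟩
    exact ⟨h1, fun i j hij hEij => h2 i j ((not_lt.mp hEij).lt_of_ne hij)⟩
  · rintro ⟨h1, h2⟩
    exact ⟨h1, fun i j hij => h2 i j (ne_of_lt hij) (lt_asymm hij)⟩

theorem permM_mul_inv (σ : Equiv.Perm (Fin n)) :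
    (σ.permMatrix R) * ((σ⁻¹).permMatrix R) = 1 := by
  simp only [Equiv.Perm.permMatrix, ← PEquiv.toMatrix_trans, ← Equiv.toPEquiv_trans]
  simp [Equiv.Perm.inv_def, Equiv.self_trans_symm, Equiv.symm_trans_self, Equiv.toPEquiv_refl,
    PEquiv.toMatrix_refl]

theorem val_inv_eq {w : GL (Fin n) R} {σ : Equiv.Perm (Fin n)}
    (hw : (w : Matrix (Fin n) (Fin n) R) = σ.permMatrix R) :
    ((w⁻¹ : GL (Fin n) R) : Matrix (Fin n) (Fin n) R) = (σ⁻¹).permMatrix R := by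
  calc ((w⁻¹ : GL (Fin n) R) : Matrix (Fin n) (Fin n) R)
      = ((w⁻¹ : GL (Fin n) R) : Matrix (Fin n) (Fin n) R)
        * ((w : Matrix (Fin n) (Fin n) R) * (σ⁻¹).permMatrix R) := by
        rw [hw, permM_mul_inv, mul_one]
    _ = (((w⁻¹ : GL (Fin n) R) : Matrix (Fin n) (Fin n) R)
        * (w : Matrix (Fin n) (Fin n) R)) * (σ⁻¹).permMatrix R := by rw [mul_assoc]
    _ = (σ⁻¹).permMatrix R := by rw [Units.inv_mul, one_mul]

theorem conj_entry {w : GL (Fin n) R} {σ : Equiv.Perm (Fin n)}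
    (hw : (w : Matrix (Fin n) (Fin n) R) = σ.permMatrix R)
    (g : GL (Fin n) R) (i j : Fin n) :
    ((w * g * w⁻¹ : GL (Fin n) R) : Matrix (Fin n) (Fin n) R) i j
      = (g : Matrix (Fin n) (Fin n) R) (σ i) (σ j) := by
  rw [Units.val_mul, Units.val_mul, hw, val_inv_eq hw, mul_assoc]
  have h1 : (σ.permMatrix R * ((g : Matrix (Fin n) (Fin n) R) * (σ⁻¹).permMatrix R)) i j
      = ((g : Matrix (Fin n) (Fin n) R) * (σ⁻¹).permMatrix R) (σ i) j := by
    rw [show σ.permMatrix R = (σ.toPEquiv.toMatrix : Matrix (Fin n) (Fin n) R) from rfl,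
      PEquiv.toMatrix_mul_apply, Equiv.toPEquiv_apply]
  have h2 : ((g : Matrix (Fin n) (Fin n) R) * (σ⁻¹).permMatrix R) (σ i) j
      = (g : Matrix (Fin n) (Fin n) R) (σ i) (σ j) := by
    rw [show (σ⁻¹ : Equiv.Perm (Fin n)).permMatrix R
        = ((σ⁻¹ : Equiv.Perm (Fin n)).toPEquiv.toMatrix : Matrix (Fin n) (Fin n) R) from rfl,
      PEquiv.mul_toMatrix_apply, ← Equiv.toPEquiv_symm]
    simp [Equiv.Perm.inv_def, Equiv.toPEquiv_apply]
  rw [h1, h2]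

theorem conjU_eq {w : GL (Fin n) R} {σ : Equiv.Perm (Fin n)}
    (hw : (w : Matrix (Fin n) (Fin n) R) = σ.permMatrix R) :
    conjSet (Uset n R) w = Pat R (EUc σ) := by
  ext g
  show IsU (w * g * w⁻¹) ↔ _
  constructor
  · rintro ⟨h1, h2⟩
    constructor
    · intro i
      have := h1 (σ⁻¹ i)
      rwa [conj_entry hw, Equiv.Perm.inv_def, Equiv.apply_symm_apply] at this
    · intro i j hij hEij
      have hne : σ⁻¹ i ≠ σ⁻¹ j := fun h => hij (by
        have := congrArg σ h
        rwa [Equiv.Perm.inv_def, Equiv.apply_symm_apply, Equiv.apply_symm_apply] at this)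
      have hlt : σ⁻¹ j < σ⁻¹ i := (not_lt.mp hEij).lt_of_ne (Ne.symm hne)
      have := h2 (σ⁻¹ i) (σ⁻¹ j) hlt
      rwa [conj_entry hw, Equiv.Perm.inv_def, Equiv.apply_symm_apply, Equiv.apply_symm_apply] at this
  · rintro ⟨h1, h2⟩
    constructor
    · intro i
      rw [conj_entry hw]
      exact h1 (σ i)
    · intro i j hij
      rw [conj_entry hw]
      refine h2 (σ i) (σ j) (fun h => (ne_of_gt hij) (σ.injective h)) ?_
      show ¬ (σ⁻¹ (σ i) < σ⁻¹ (σ j))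
      simp only [Equiv.Perm.inv_def, Equiv.symm_apply_apply]
      exact lt_asymm hij

theorem conjV_eq {w : GL (Fin n) R} {σ : Equiv.Perm (Fin n)}
    (hw : (w : Matrix (Fin n) (Fin n) R) = σ.permMatrix R) :
    conjSet (Vset n R) w = Pat R (EVc σ) := by
  ext g
  show IsV (w * g * w⁻¹) ↔ _
  constructor
  · rintro ⟨h1, h2⟩
    constructor
    · intro i
      have := h1 (σ⁻¹ i)
      rwa [conj_entry hw, Equiv.Perm.inv_def, Equiv.apply_symm_apply] at this
    · intro i j hij hEij
      have hne : σ⁻¹ i ≠ σ⁻¹ j := fun h => hij (by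
        have := congrArg σ h
        rwa [Equiv.Perm.inv_def, Equiv.apply_symm_apply, Equiv.apply_symm_apply] at this)
      have hlt : σ⁻¹ i < σ⁻¹ j := (not_lt.mp hEij).lt_of_ne hne
      have := h2 (σ⁻¹ i) (σ⁻¹ j) hlt
      rwa [conj_entry hw, Equiv.Perm.inv_def, Equiv.apply_symm_apply, Equiv.apply_symm_apply] at this
  · rintro ⟨h1, h2⟩
    constructor
    · intro i
      rw [conj_entry hw]
      exact h1 (σ i)
    · intro i j hij
      rw [conj_entry hw]
      refine h2 (σ i) (σ j) (fun h => (ne_of_lt hij) (σ.injective h)) ?_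
      show ¬ (σ⁻¹ (σ j) < σ⁻¹ (σ i))
      simp only [Equiv.Perm.inv_def, Equiv.symm_apply_apply]
      exact lt_asymm hij

end Ident

section Diag
variable {n : ℕ} {R : Type*} [CommRing R] [Fintype R] [DecidableEq R]

theorem diag_mul_entry {l : GL (Fin n) R} (hl : IsL l) (A : Matrix (Fin n) (Fin n) R) (i j : Fin n) :
    ((l : Matrix (Fin n) (Fin n) R) * A) i j = (l : Matrix (Fin n) (Fin n) R) i i * A i j := by
  rw [Matrix.mul_apply, Finset.sum_eq_single i]
  · intro k _ hk
    rw [hl i k (Ne.symm hk), zero_mul]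
  · intro h; exact absurd (Finset.mem_univ i) h

theorem mul_diag_entry {l : GL (Fin n) R} (hl : IsL l) (A : Matrix (Fin n) (Fin n) R) (i j : Fin n) :
    (A * (l : Matrix (Fin n) (Fin n) R)) i j = A i j * (l : Matrix (Fin n) (Fin n) R) j j := by
  rw [Matrix.mul_apply, Finset.sum_eq_single j]
  · intro k _ hk
    rw [hl k j hk, mul_zero]
  · intro h; exact absurd (Finset.mem_univ j) h

theorem diag_inv_diag {l : GL (Fin n) R} (hl : IsL l) (i : Fin n) :
    (l : Matrix (Fin n) (Fin n) R) i i * ((l⁻¹ : GL (Fin n) R) : Matrix (Fin n) (Fin n) R) i i = 1 := by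
  have h := congrFun (congrFun (Units.mul_inv l) i) i
  rw [diag_mul_entry hl] at h
  rw [h]
  exact Matrix.one_apply_eq i

theorem inv_diag_diag {l : GL (Fin n) R} (hl : IsL l) (i : Fin n) :
    ((l⁻¹ : GL (Fin n) R) : Matrix (Fin n) (Fin n) R) i i * (l : Matrix (Fin n) (Fin n) R) i i = 1 := by
  have h := congrFun (congrFun (Units.inv_mul l) i) i
  rw [mul_diag_entry hl] at h
  rw [h]
  exact Matrix.one_apply_eq i

theorem isL_inv {l : GL (Fin n) R} (hl : IsL l) : IsL l⁻¹ := by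
  intro i j hij
  have h := congrFun (congrFun (Units.mul_inv l) i) j
  rw [diag_mul_entry hl, Matrix.one_apply_ne hij] at h
  -- h : l i i * linv i j = 0
  have h2 := inv_diag_diag hl i
  calc ((l⁻¹ : GL (Fin n) R) : Matrix (Fin n) (Fin n) R) i j
      = (((l⁻¹ : GL (Fin n) R) : Matrix (Fin n) (Fin n) R) i i * (l : Matrix (Fin n) (Fin n) R) i i)
        * ((l⁻¹ : GL (Fin n) R) : Matrix (Fin n) (Fin n) R) i j := by rw [h2, one_mul]
    _ = ((l⁻¹ : GL (Fin n) R) : Matrix (Fin n) (Fin n) R) i i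
        * ((l : Matrix (Fin n) (Fin n) R) i i * ((l⁻¹ : GL (Fin n) R) : Matrix (Fin n) (Fin n) R) i j) := by ring
    _ = 0 := by rw [h, mul_zero]

theorem isV_conj {l v : GL (Fin n) R} (hl : IsL l) (hv : IsV v) : IsV (l * v * l⁻¹) := by
  have hentry : ∀ i j, ((l * v * l⁻¹ : GL (Fin n) R) : Matrix (Fin n) (Fin n) R) i j
      = (l : Matrix (Fin n) (Fin n) R) i i * ((v : Matrix (Fin n) (Fin n) R) i j
        * ((l⁻¹ : GL (Fin n) R) : Matrix (Fin n) (Fin n) R) j j) := by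
    intro i j
    rw [show ((l * v * l⁻¹ : GL (Fin n) R) : Matrix (Fin n) (Fin n) R)
        = (l : Matrix (Fin n) (Fin n) R) * ((v : Matrix (Fin n) (Fin n) R)
          * ((l⁻¹ : GL (Fin n) R) : Matrix (Fin n) (Fin n) R)) from by
      rw [Units.val_mul, Units.val_mul, mul_assoc]]
    rw [diag_mul_entry hl, mul_diag_entry (isL_inv hl)]
  constructor
  · intro i
    rw [hentry, hv.1 i, one_mul]
    exact diag_inv_diag hl i
  · intro i j hij
    rw [hentry, hv.2 i j hij, zero_mul, mul_zero]

theorem eAvg_V_comm_diag {l : GL (Fin n) R} (hl : IsL l) :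
    PS.eAvg (Vset n R) * MonoidAlgebra.of ℂ (GL (Fin n) R) l
      = MonoidAlgebra.of ℂ (GL (Fin n) R) l * PS.eAvg (Vset n R) := by
  unfold PS.eAvg
  rw [smul_mul_assoc, mul_smul_comm, Finset.sum_mul, Finset.mul_sum]
  congr 1
  refine Finset.sum_nbij' (fun x => l⁻¹ * x * l) (fun x => l * x * l⁻¹) ?_ ?_ ?_ ?_ ?_
  · intro x hx
    rw [Set.mem_toFinset] at *
    have := isV_conj (isL_inv hl) hx
    rwa [inv_inv] at this
  · intro x hx
    rw [Set.mem_toFinset] at *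
    exact isV_conj hl hx
  · intro x _; group
  · intro x _; group
  · intro x _
    rw [← _root_.map_mul, ← _root_.map_mul]
    congr 1
    group

end Diag

section Main
open PS
variable {Γ : Type*} [Group Γ] [Fintype Γ]

theorem ip_zero_right (y : MonoidAlgebra ℂ Γ) : ip y (0 : MonoidAlgebra ℂ Γ) = 0 := by
  unfold ip
  refine Finset.sum_eq_zero fun g _ => ?_
  rw [MonoidAlgebra.coeff_zero, Finsupp.coe_zero, Pi.zero_apply, mul_zero]

/-- the core positivity argument: if `x = e_H e_B y` is killed by `e_K`,
where `e_K = e_{S4} e_{S3}`, `S3 ⊆ H`, `e_B = e_{S2} e_{S4}`, then `x = 0`. -/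
theorem inj_core {H B K S2 S3 S4 : Set Γ} (hH : IsSG H) (hB : IsSG B)
    (hS3 : S3 ⊆ H) (hS3ne : S3.Nonempty)
    (hK : PS.eAvg K = (PS.eAvg S4 : MonoidAlgebra ℂ Γ) * PS.eAvg S3)
    (hBe : PS.eAvg B = (PS.eAvg S2 : MonoidAlgebra ℂ Γ) * PS.eAvg S4)
    (y : MonoidAlgebra ℂ Γ)
    (hzero : PS.eAvg K * (PS.eAvg H * (PS.eAvg B * y)) = 0) :
    PS.eAvg H * (PS.eAvg B * y) = 0 := by
  set x : MonoidAlgebra ℂ Γ := PS.eAvg H * (PS.eAvg B * y) with hx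
  have hfixH : ∀ g ∈ H, MonoidAlgebra.of ℂ Γ g * x = x := by
    intro g hg
    rw [hx, ← mul_assoc, of_mul_eAvg hH hg]
  have h3 : PS.eAvg S3 * x = x :=
    eAvg_mul_fix hS3ne (fun g hg => hfixH g (hS3 hg))
  have h4 : PS.eAvg S4 * x = 0 := by
    have hKx : PS.eAvg K * x = PS.eAvg S4 * x := by
      rw [hK, mul_assoc, h3]
    rw [← hKx]
    exact hzero
  have hBx : PS.eAvg B * x = 0 := by
    rw [hBe, mul_assoc, h4, mul_zero]
  have hidem : PS.eAvg H * x = x := by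
    rw [hx, ← mul_assoc, eAvg_idem hH]
  have h1 : ip x x = ip (PS.eAvg B * y) x := by
    calc ip x x = ip (PS.eAvg H * (PS.eAvg B * y)) x := by rw [← hx]
      _ = ip (PS.eAvg B * y) (PS.eAvg H * x) := ip_eAvg_move (fun ha => hH.inv_mem ha) _ _
      _ = ip (PS.eAvg B * y) x := by rw [hidem]
  have h2 : ip (PS.eAvg B * y) x = ip y (PS.eAvg B * x) :=
    ip_eAvg_move (fun ha => hB.inv_mem ha) _ _
  rw [hBx, ip_zero_right] at h2
  exact ip_self_eq_zero (by rw [h1, h2])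

end Main

section MainCore
open PS
variable {n : ℕ} {R : Type*} [CommRing R] [Fintype R] [DecidableEq R]

set_option synthInstance.maxHeartbeats 1000000 in
theorem main_core (σ : Equiv.Perm (Fin n)) :
    Set.BijOn (fun x => (PS.eAvg (Pat R (EV n)) : MonoidAlgebra ℂ (GL (Fin n) R)) * x)
      {x : MonoidAlgebra ℂ (GL (Fin n) R) |
        ∃ y, x = PS.eAvg (Pat R (EUc σ)) * PS.eAvg (Pat R (EVc σ)) * y}
      {x : MonoidAlgebra ℂ (GL (Fin n) R) |
        ∃ y, x = PS.eAvg (Pat R (EV n)) * PS.eAvg (Pat R (EU n)) * y} := by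
  have hinj : Function.Injective (σ⁻¹ : Equiv.Perm (Fin n)) := (σ⁻¹).injective
  -- the four intersection relations
  set A1 := EI (EU n) (EUc σ) with hA1
  set A2 := EI (EU n) (EVc σ) with hA2
  set A3 := EI (EV n) (EUc σ) with hA3
  set A4 := EI (EV n) (EVc σ) with hA4
  -- GoodE facts
  have g1r : GoodE A1 (Equiv.refl (Fin n)) := goodEI goodEU (goodEUc σ)
  have g1c : GoodE A1 σ⁻¹ := goodEI' goodEU (goodEUc σ)
  have g2r : GoodE A2 (Equiv.refl (Fin n)) := goodEI goodEU (goodEVc σ)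
  have g2c : GoodE A2 ((σ⁻¹ : Equiv.Perm (Fin n)).trans Fin.revPerm) := goodEI' goodEU (goodEVc σ)
  have g3v : GoodE A3 Fin.revPerm := goodEI goodEV (goodEUc σ)
  have g3c : GoodE A3 σ⁻¹ := goodEI' goodEV (goodEUc σ)
  have g4v : GoodE A4 Fin.revPerm := goodEI goodEV (goodEVc σ)
  have g4c : GoodE A4 ((σ⁻¹ : Equiv.Perm (Fin n)).trans Fin.revPerm) := goodEI' goodEV (goodEVc σ)
  -- abbreviations
  set u : MonoidAlgebra ℂ (GL (Fin n) R) := PS.eAvg (Pat R (EU n)) with hu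
  set v : MonoidAlgebra ℂ (GL (Fin n) R) := PS.eAvg (Pat R (EV n)) with hv
  set al : MonoidAlgebra ℂ (GL (Fin n) R) := PS.eAvg (Pat R (EUc σ)) with hal
  set be : MonoidAlgebra ℂ (GL (Fin n) R) := PS.eAvg (Pat R (EVc σ)) with hbe
  set a1 : MonoidAlgebra ℂ (GL (Fin n) R) := PS.eAvg (Pat R A1) with ha1
  set a2 : MonoidAlgebra ℂ (GL (Fin n) R) := PS.eAvg (Pat R A2) with ha2
  set a3 : MonoidAlgebra ℂ (GL (Fin n) R) := PS.eAvg (Pat R A3) with ha3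
  set a4 : MonoidAlgebra ℂ (GL (Fin n) R) := PS.eAvg (Pat R A4) with ha4
  have hne : ∀ i j : Fin n, i ≠ j → (σ⁻¹ : Equiv.Perm (Fin n)) i ≠ (σ⁻¹ : Equiv.Perm (Fin n)) j :=
    fun i j h h' => h (hinj h')
  -- the eight partition identities
  have hU1 : a1 * a2 = u := by
    rw [ha1, ha2, hu]
    refine eAvg_mul_eAvg (pat_bijOn ?_ ?_ ?_ ?_ g1r g2r goodEU)
    · rintro i j ⟨_, h⟩ ⟨_, h'⟩; exact lt_asymm h h'
    · rintro i j ⟨h, _⟩; exact h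
    · rintro i j ⟨h, _⟩; exact h
    · intro i j hij h
      rcases lt_or_gt_of_ne (hne i j hij) with h' | h'
      · exact Or.inl ⟨h, h'⟩
      · exact Or.inr ⟨h, h'⟩
  have hU2 : a2 * a1 = u := by
    rw [ha1, ha2, hu]
    refine eAvg_mul_eAvg (pat_bijOn ?_ ?_ ?_ ?_ g2r g1r goodEU)
    · rintro i j ⟨_, h⟩ ⟨_, h'⟩; exact lt_asymm h h'
    · rintro i j ⟨h, _⟩; exact h
    · rintro i j ⟨h, _⟩; exact h
    · intro i j hij h
      rcases lt_or_gt_of_ne (hne i j hij) with h' | h'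
      · exact Or.inr ⟨h, h'⟩
      · exact Or.inl ⟨h, h'⟩
  have hV1 : a4 * a3 = v := by
    rw [ha3, ha4, hv]
    refine eAvg_mul_eAvg (pat_bijOn ?_ ?_ ?_ ?_ g4v g3v goodEV)
    · rintro i j ⟨_, h⟩ ⟨_, h'⟩; exact lt_asymm h h'
    · rintro i j ⟨h, _⟩; exact h
    · rintro i j ⟨h, _⟩; exact h
    · intro i j hij h
      rcases lt_or_gt_of_ne (hne i j hij) with h' | h'
      · exact Or.inr ⟨h, h'⟩
      · exact Or.inl ⟨h, h'⟩
  have hV2 : a3 * a4 = v := by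
    rw [ha3, ha4, hv]
    refine eAvg_mul_eAvg (pat_bijOn ?_ ?_ ?_ ?_ g3v g4v goodEV)
    · rintro i j ⟨_, h⟩ ⟨_, h'⟩; exact lt_asymm h h'
    · rintro i j ⟨h, _⟩; exact h
    · rintro i j ⟨h, _⟩; exact h
    · intro i j hij h
      rcases lt_or_gt_of_ne (hne i j hij) with h' | h'
      · exact Or.inl ⟨h, h'⟩
      · exact Or.inr ⟨h, h'⟩
  have hUc1 : a3 * a1 = al := by
    rw [ha3, ha1, hal]
    refine eAvg_mul_eAvg (pat_bijOn ?_ ?_ ?_ ?_ g3c g1c (goodEUc σ))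
    · rintro i j ⟨h, _⟩ ⟨h', _⟩; exact lt_asymm h h'
    · rintro i j ⟨_, h⟩; exact h
    · rintro i j ⟨_, h⟩; exact h
    · intro i j hij h
      rcases lt_or_gt_of_ne hij with h' | h'
      · exact Or.inr ⟨h', h⟩
      · exact Or.inl ⟨h', h⟩
  have hUc2 : a1 * a3 = al := by
    rw [ha3, ha1, hal]
    refine eAvg_mul_eAvg (pat_bijOn ?_ ?_ ?_ ?_ g1c g3c (goodEUc σ))
    · rintro i j ⟨h, _⟩ ⟨h', _⟩; exact lt_asymm h h'
    · rintro i j ⟨_, h⟩; exact h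
    · rintro i j ⟨_, h⟩; exact h
    · intro i j hij h
      rcases lt_or_gt_of_ne hij with h' | h'
      · exact Or.inl ⟨h', h⟩
      · exact Or.inr ⟨h', h⟩
  have hVc1 : a2 * a4 = be := by
    rw [ha2, ha4, hbe]
    refine eAvg_mul_eAvg (pat_bijOn ?_ ?_ ?_ ?_ g2c g4c (goodEVc σ))
    · rintro i j ⟨h, _⟩ ⟨h', _⟩; exact lt_asymm h h'
    · rintro i j ⟨_, h⟩; exact h
    · rintro i j ⟨_, h⟩; exact h
    · intro i j hij h
      rcases lt_or_gt_of_ne hij with h' | h'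
      · exact Or.inl ⟨h', h⟩
      · exact Or.inr ⟨h', h⟩
  have hVc2 : a4 * a2 = be := by
    rw [ha2, ha4, hbe]
    refine eAvg_mul_eAvg (pat_bijOn ?_ ?_ ?_ ?_ g4c g2c (goodEVc σ))
    · rintro i j ⟨h, _⟩ ⟨h', _⟩; exact lt_asymm h h'
    · rintro i j ⟨_, h⟩; exact h
    · rintro i j ⟨_, h⟩; exact h
    · intro i j hij h
      rcases lt_or_gt_of_ne hij with h' | h'
      · exact Or.inr ⟨h', h⟩
      · exact Or.inl ⟨h', h⟩
  -- absorption identities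
  have hab1 : v * a3 = v := by
    rw [hv, ha3]
    exact eAvg_absorb_mul_eAvg (isSG_pat goodEV) (pat_ne) (pat_sub (fun h => h.1))
  have hab2 : a2 * u = u := by
    rw [hu, ha2]
    exact eAvg_mul_eAvg_absorb (isSG_pat goodEU) (pat_ne) (pat_sub (fun h => h.1))
  have hab3 : al * a3 = al := by
    rw [hal, ha3]
    exact eAvg_absorb_mul_eAvg (isSG_pat (goodEUc σ)) (pat_ne) (pat_sub (fun h => h.2))
  -- main product identities
  have hM1 : v * (al * be) = (v * u) * a4 := by
    calc v * (al * be) = v * ((a3 * a1) * (a2 * a4)) := by rw [hUc1, hVc1]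
      _ = ((v * a3) * (a1 * a2)) * a4 := by noncomm_ring
      _ = (v * u) * a4 := by rw [hab1, hU1]
  have hM2 : al * (v * u) = (al * be) * u := by
    calc al * (v * u) = al * ((a3 * a4) * u) := by rw [hV2]
      _ = ((al * a3) * a4) * u := by noncomm_ring
      _ = (al * a4) * u := by rw [hab3]
      _ = ((al * (a4 * a2)) * u) := by
          have : al * (a4 * (a2 * u)) = al * (a4 * u) := by rw [hab2]
          calc (al * a4) * u = al * (a4 * u) := by noncomm_ring
            _ = al * (a4 * (a2 * u)) := by rw [hab2]
            _ = (al * (a4 * a2)) * u := by noncomm_ring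
      _ = (al * be) * u := by rw [hVc2]
  -- subgroup structures
  have hSG_Uc : IsSG (Pat R (EUc σ)) := isSG_pat (goodEUc σ)
  have hSG_Vc : IsSG (Pat R (EVc σ)) := isSG_pat (goodEVc σ)
  have hSG_U : IsSG (Pat R (EU n)) := isSG_pat goodEU
  have hSG_V : IsSG (Pat R (EV n)) := isSG_pat goodEV
  -- the two injectivity statements (positivity trick)
  have hinj1 : ∀ y : MonoidAlgebra ℂ (GL (Fin n) R),
      v * (al * (be * y)) = 0 → al * (be * y) = 0 :=
    fun y h0 => inj_core hSG_Uc hSG_Vc (pat_sub (fun h => h.2)) pat_ne hV1.symm hVc1.symm y h0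
  have hinj2 : ∀ y : MonoidAlgebra ℂ (GL (Fin n) R),
      al * (v * (u * y)) = 0 → v * (u * y) = 0 :=
    fun y h0 => inj_core hSG_V hSG_U (pat_sub (fun h => h.1)) pat_ne hUc2.symm hU2.symm y h0
  -- linear algebra
  set S' : Submodule ℂ (MonoidAlgebra ℂ (GL (Fin n) R)) :=
    LinearMap.range (LinearMap.mulLeft ℂ (al * be)) with hS'
  set T' : Submodule ℂ (MonoidAlgebra ℂ (GL (Fin n) R)) :=
    LinearMap.range (LinearMap.mulLeft ℂ (v * u)) with hT'
  have hmemS : ∀ x, x ∈ S' ↔ ∃ y, x = al * be * y := by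
    intro x
    rw [hS', LinearMap.mem_range]
    constructor
    · rintro ⟨y, hy⟩; exact ⟨y, by rw [← hy, LinearMap.mulLeft_apply]⟩
    · rintro ⟨y, hy⟩; exact ⟨y, by rw [hy, LinearMap.mulLeft_apply]⟩
  have hmemT : ∀ x, x ∈ T' ↔ ∃ y, x = v * u * y := by
    intro x
    rw [hT', LinearMap.mem_range]
    constructor
    · rintro ⟨y, hy⟩; exact ⟨y, by rw [← hy, LinearMap.mulLeft_apply]⟩
    · rintro ⟨y, hy⟩; exact ⟨y, by rw [hy, LinearMap.mulLeft_apply]⟩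
  have hST : ∀ x ∈ S', v * x ∈ T' := by
    intro x hx
    obtain ⟨y, hy⟩ := (hmemS x).mp hx
    refine (hmemT _).mpr ⟨a4 * y, ?_⟩
    rw [hy]
    calc v * (al * be * y) = (v * (al * be)) * y := by noncomm_ring
      _ = ((v * u) * a4) * y := by rw [hM1]
      _ = v * u * (a4 * y) := by noncomm_ring
  have hTS : ∀ x ∈ T', al * x ∈ S' := by
    intro x hx
    obtain ⟨y, hy⟩ := (hmemT x).mp hx
    refine (hmemS _).mpr ⟨u * y, ?_⟩
    rw [hy]
    calc al * (v * u * y) = (al * (v * u)) * y := by noncomm_ring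
      _ = ((al * be) * u) * y := by rw [hM2]
      _ = al * be * (u * y) := by noncomm_ring
  set F : S' →ₗ[ℂ] T' := (LinearMap.mulLeft ℂ v).restrict hST with hF
  set Gm : T' →ₗ[ℂ] S' := (LinearMap.mulLeft ℂ al).restrict hTS with hGm
  have hFval : ∀ x : S', (F x : MonoidAlgebra ℂ (GL (Fin n) R)) = v * (x : MonoidAlgebra ℂ (GL (Fin n) R)) :=
    fun x => rfl
  have hGval : ∀ x : T', (Gm x : MonoidAlgebra ℂ (GL (Fin n) R)) = al * (x : MonoidAlgebra ℂ (GL (Fin n) R)) :=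
    fun x => rfl
  have hFinj : Function.Injective F := by
    intro x1 x2 hEq
    have h1 : v * (x1 : MonoidAlgebra ℂ (GL (Fin n) R)) = v * (x2 : MonoidAlgebra ℂ (GL (Fin n) R)) := by
      rw [← hFval, ← hFval, hEq]
    obtain ⟨y1, hy1⟩ := (hmemS _).mp x1.2
    obtain ⟨y2, hy2⟩ := (hmemS _).mp x2.2
    have hsub : (x1 : MonoidAlgebra ℂ (GL (Fin n) R)) - x2 = al * (be * (y1 - y2)) := by
      rw [hy1, hy2]; noncomm_ring
    have h0 := hinj1 (y1 - y2) (by rw [← hsub, mul_sub, h1, sub_self])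
    exact Subtype.ext (sub_eq_zero.mp (hsub.trans h0))
  have hGinj : Function.Injective Gm := by
    intro x1 x2 hEq
    have h1 : al * (x1 : MonoidAlgebra ℂ (GL (Fin n) R)) = al * (x2 : MonoidAlgebra ℂ (GL (Fin n) R)) := by
      rw [← hGval, ← hGval, hEq]
    obtain ⟨y1, hy1⟩ := (hmemT _).mp x1.2
    obtain ⟨y2, hy2⟩ := (hmemT _).mp x2.2
    have hsub : (x1 : MonoidAlgebra ℂ (GL (Fin n) R)) - x2 = v * (u * (y1 - y2)) := by
      rw [hy1, hy2]; noncomm_ring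
    have h0 := hinj2 (y1 - y2) (by rw [← hsub, mul_sub, h1, sub_self])
    exact Subtype.ext (sub_eq_zero.mp (hsub.trans h0))
  haveI hfinG : Finite (GL (Fin n) R) := Finite.of_fintype _
  haveI hfd : FiniteDimensional ℂ (MonoidAlgebra ℂ (GL (Fin n) R)) :=
    Module.Finite.equiv ((MonoidAlgebra.coeffLinearEquiv ℂ).trans (Finsupp.linearEquivFunOnFinite ℂ ℂ (GL (Fin n) R))).symm
  haveI : FiniteDimensional ℂ ↥S' := FiniteDimensional.finiteDimensional_submodule S'
  haveI : FiniteDimensional ℂ ↥T' := FiniteDimensional.finiteDimensional_submodule T'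
  have hrank : Module.finrank ℂ S' = Module.finrank ℂ T' :=
    le_antisymm (LinearMap.finrank_le_finrank_of_injective hFinj)
      (LinearMap.finrank_le_finrank_of_injective hGinj)
  have hFsurj : Function.Surjective F :=
    (LinearMap.injective_iff_surjective_of_finrank_eq_finrank hrank).mp hFinj
  -- assemble the BijOn
  refine ⟨?_, ?_, ?_⟩
  · rintro x ⟨y, hy⟩
    refine ⟨a4 * y, ?_⟩
    show v * x = v * u * (a4 * y)
    rw [hy]
    calc v * (al * be * y) = (v * (al * be)) * y := by noncomm_ring
      _ = ((v * u) * a4) * y := by rw [hM1]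
      _ = v * u * (a4 * y) := by noncomm_ring
  · rintro x1 ⟨y1, hy1⟩ x2 ⟨y2, hy2⟩ hEq
    simp only at hEq
    have hsub : x1 - x2 = al * (be * (y1 - y2)) := by
      rw [hy1, hy2]; noncomm_ring
    have h0 := hinj1 (y1 - y2) (by rw [← hsub, mul_sub, hEq, sub_self])
    exact sub_eq_zero.mp (hsub.trans h0)
  · rintro t ⟨y, hy⟩
    have htT : t ∈ T' := (hmemT t).mpr ⟨y, hy⟩
    obtain ⟨s, hs⟩ := hFsurj ⟨t, htT⟩
    obtain ⟨y', hy'⟩ := (hmemS (s : MonoidAlgebra ℂ (GL (Fin n) R))).mp s.2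
    refine ⟨(s : MonoidAlgebra ℂ (GL (Fin n) R)), ⟨y', hy'⟩, ?_⟩
    show v * (s : MonoidAlgebra ℂ (GL (Fin n) R)) = t
    rw [← hFval]
    rw [hs]

end MainCore

end PSAux

open PS in
/-- Lemma 3.5: the map `x ↦ e_V x` is an isomorphism of `C[L]`-`C[G]` bimodules from
`e_{U^w} e_{V^w} C[G]` onto `e_V e_U C[G]`.  (Right `C[G]`-linearity of left multiplication
is automatic; left `C[L]`-equivariance is the second clause.) -/
theorem eV_mul_bijOn (n : ℕ) (R : Type*) [CommRing R] [IsLocalRing R] [Fintype R] [DecidableEq R]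
    (w : GL (Fin n) R) (hw : IsW w) :
    Set.BijOn (fun x => eAvg (Vset n R) * x)
      {x : MonoidAlgebra ℂ (GL (Fin n) R) |
        ∃ y, x = eAvg (conjSet (Uset n R) w) * eAvg (conjSet (Vset n R) w) * y}
      {x : MonoidAlgebra ℂ (GL (Fin n) R) | ∃ y, x = eAvg (Vset n R) * eAvg (Uset n R) * y} ∧
    ∀ l : GL (Fin n) R, IsL l → ∀ x : MonoidAlgebra ℂ (GL (Fin n) R),
      eAvg (Vset n R) * (MonoidAlgebra.of ℂ (GL (Fin n) R) l * x) =
        MonoidAlgebra.of ℂ (GL (Fin n) R) l * (eAvg (Vset n R) * x) := by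
  classical
  obtain ⟨σ, hwσ⟩ := hw
  constructor
  · rw [PSAux.conjU_eq hwσ, PSAux.conjV_eq hwσ, PSAux.Uset_eq, PSAux.Vset_eq]
    exact PSAux.main_core σ
  · intro l hl x
    rw [← mul_assoc, PSAux.eAvg_V_comm_diag hl, mul_assoc]
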